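/- Let G ⊆ GL_d(ℝ) act linearly on ℝ^d leaving L invariant, and let M ∈ Lie(G). Then along any gradient flow curve γ of L, one has γ'(t)ᵀ M γ(t) = 0 for all t. -/

import Mathlib

open Matrix
open scoped RealInnerProductSpace

/-- Let `G ⊆ GL_d(ℝ)` act linearly on `ℝ^d` leaving the differentiable function `L`
invariant, and let `M ∈ Lie(G)` (so the one-parameter subgroup `exp(tM)` lies in `G`
and leaves `L` invariant). Then along any gradient flow curve `γ` of `L`, one has
`γ'(t)ᵀ M γ(t) = 0` for all `t`. -/
theorem gradient_flow_orthogonal_to_lie_algebra_action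
    {d : ℕ} (L : EuclideanSpace ℝ (Fin d) → ℝ) (hL : Differentiable ℝ L)
    (M : Matrix (Fin d) (Fin d) ℝ)
    (hM : ∀ (t : ℝ) (θ : EuclideanSpace ℝ (Fin d)),
      L (Matrix.toEuclideanLin (NormedSpace.exp (t • M)) θ) = L θ)
    (γ γ' : ℝ → EuclideanSpace ℝ (Fin d))
    (hγ : ∀ t : ℝ, HasDerivAt γ (γ' t) t)
    (hflow : ∀ t : ℝ, γ' t = -gradient L (γ t)) (t : ℝ) :
    ⟪γ' t, Matrix.toEuclideanLin M (γ t)⟫ = 0 := by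
  letI := Matrix.linftyOpNormedRing (n := Fin d) (α := ℝ)
  letI := Matrix.linftyOpNormedAlgebra (n := Fin d) (R := ℝ) (α := ℝ)
  set θ := γ t with hθ
  -- the continuous linear map `A ↦ (toEuclideanLin A) θ`
  let φ : Matrix (Fin d) (Fin d) ℝ →L[ℝ] EuclideanSpace ℝ (Fin d) :=
    LinearMap.toContinuousLinearMap
      ((Matrix.toEuclideanLin (𝕜 := ℝ) (m := Fin d) (n := Fin d)).toLinearMap.flip θ)
  have hφ : ∀ A : Matrix (Fin d) (Fin d) ℝ, φ A = Matrix.toEuclideanLin A θ := fun A => rfl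
  have h1 : HasDerivAt (fun s : ℝ => NormedSpace.exp (s • M)) M 0 := by
    have h := hasDerivAt_exp_smul_const (𝕂 := ℝ) M 0
    simp at h
    exact h
  have h2 : HasDerivAt (fun s : ℝ => φ (NormedSpace.exp (s • M))) (φ M) 0 :=
    (φ.hasFDerivAt).comp_hasDerivAt 0 h1
  have hbase : φ (NormedSpace.exp ((0 : ℝ) • M)) = θ := by
    simp [hφ, Matrix.toEuclideanLin_eq_toLin, Matrix.toLin_one]
  have h3 : HasDerivAt (fun s : ℝ => L (φ (NormedSpace.exp (s • M))))
      (fderiv ℝ L θ (φ M)) 0 := by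
    have h := (hL.differentiableAt
        (x := φ (NormedSpace.exp ((0 : ℝ) • M)))).hasFDerivAt.comp_hasDerivAt 0 h2
    rw [hbase] at h
    exact h
  have hconst : (fun s : ℝ => L (φ (NormedSpace.exp (s • M)))) = fun _ => L θ := by
    funext s
    simp [hφ, hM]
  have h4 : fderiv ℝ L θ (φ M) = 0 := by
    have h0 : HasDerivAt (fun _ : ℝ => L θ) 0 0 := hasDerivAt_const _ _
    have := h3.unique (hconst ▸ h0)
    simpa using this
  have hgrad : ⟪gradient L θ, φ M⟫ = fderiv ℝ L θ (φ M) :=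
    InnerProductSpace.toDual_symm_apply
  rw [hflow t, ← hφ]
  rw [inner_neg_left, hgrad, h4, neg_zero]
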